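/- The function f(p) = -95482233 + 127309644p - 42257600pπ² + 18110400p²π² - 18110400(-1 + 2√((1-p)p))π² is strictly increasing on [0.65, (1423 + 10√1729)/1945] and satisfies f((1423 + 10√1729)/1945) < 0; hence f(p) < 0 on this interval. -/

import Mathlib

set_option maxHeartbeats 1000000 in
theorem stmt_11 (f : ℝ → ℝ)
    (hf : ∀ p, f p = -95482233 + 127309644 * p - 42257600 * p * Real.pi ^ 2
      + 18110400 * p ^ 2 * Real.pi ^ 2
      - 18110400 * (-1 + 2 * Real.sqrt ((1 - p) * p)) * Real.pi ^ 2) :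
    StrictMonoOn f (Set.Icc (0.65 : ℝ) ((1423 + 10 * Real.sqrt 1729) / 1945)) ∧
    f ((1423 + 10 * Real.sqrt 1729) / 1945) < 0 ∧
    ∀ p ∈ Set.Icc (0.65 : ℝ) ((1423 + 10 * Real.sqrt 1729) / 1945), f p < 0 := by
  have pi_lt := Real.pi_lt_d6
  have pi_gt := Real.pi_gt_d6
  have pi_pos := Real.pi_pos
  have pi2u : Real.pi ^ 2 < 9.8697 := by nlinarith
  have pi2l : (9.8695 : ℝ) < Real.pi ^ 2 := by nlinarith
  have hs1729 : Real.sqrt 1729 ^ 2 = 1729 := Real.sq_sqrt (by norm_num)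
  have hs1729n : (0:ℝ) ≤ Real.sqrt 1729 := Real.sqrt_nonneg _
  have ht1 : (41.58 : ℝ) < Real.sqrt 1729 := by nlinarith
  have ht2 : Real.sqrt 1729 < 41.582 := by nlinarith
  obtain ⟨b, hb1, hb2, hbeq⟩ : ∃ b : ℝ, 0.9453 < b ∧ b < 0.9455 ∧
      (1423 + 10 * Real.sqrt 1729) / 1945 = b := by
    refine ⟨_, ?_, ?_, rfl⟩
    · rw [lt_div_iff₀ (by norm_num)]; nlinarith
    · rw [div_lt_iff₀ (by norm_num)]; nlinarith
  rw [hbeq]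
  have hfun : f = fun p : ℝ => (-95482233 + 127309644 * p - 42257600 * p * Real.pi ^ 2
      + 18110400 * p ^ 2 * Real.pi ^ 2 + 18110400 * Real.pi ^ 2)
      - 36220800 * Real.pi ^ 2 * Real.sqrt ((1 - p) * p) := by
    funext p; rw [hf]; ring
  have hmono : StrictMonoOn f (Set.Icc (0.65 : ℝ) b) := by
    apply strictMonoOn_of_deriv_pos (convex_Icc _ _)
    · rw [hfun]
      fun_prop
    · intro x hx
      rw [interior_Icc] at hx
      obtain ⟨hx1, hx2⟩ := hx
      have hx2' : x < 0.9455 := lt_trans hx2 hb2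
      have hu : (0:ℝ) < (1 - x) * x := by nlinarith
      have h1 : HasDerivAt (fun p : ℝ => (1 - p) * p) (1 - 2 * x) x := by
        have h := ((hasDerivAt_id x).const_sub (1:ℝ)).fun_mul (hasDerivAt_id x)
        refine h.congr_deriv ?_
        simp only [id_eq]
        ring
      have hsq : HasDerivAt (fun p : ℝ => Real.sqrt ((1 - p) * p))
          ((1 - 2 * x) / (2 * Real.sqrt ((1 - x) * x))) x := h1.sqrt (ne_of_gt hu)
      have hpoly : HasDerivAt (fun p : ℝ => -95482233 + 127309644 * p
          - 42257600 * p * Real.pi ^ 2 + 18110400 * p ^ 2 * Real.pi ^ 2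
          + 18110400 * Real.pi ^ 2)
          (127309644 - 42257600 * Real.pi ^ 2 + 36220800 * x * Real.pi ^ 2) x := by
        have h1' := hasDerivAt_id x
        have h2 := hasDerivAt_pow 2 x
        have h3 := ((((h1'.const_mul (127309644:ℝ)).const_add (-95482233:ℝ)).fun_add
            ((h1'.const_mul (42257600 * Real.pi ^ 2)).fun_neg)).fun_add
            (h2.const_mul (18110400 * Real.pi ^ 2))).add_const (18110400 * Real.pi ^ 2)
        convert h3 using 2 <;>
          first
          | rfl
          | (simp only [id_eq]; ring)
          | (push_cast; ring)
      have hD : HasDerivAt f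
          (127309644 - 42257600 * Real.pi ^ 2 + 36220800 * x * Real.pi ^ 2
            - 36220800 * Real.pi ^ 2 * ((1 - 2 * x) / (2 * Real.sqrt ((1 - x) * x)))) x := by
        rw [hfun]
        exact hpoly.sub (hsq.const_mul _)
      rw [hD.deriv]
      have hs0 : 0 < Real.sqrt ((1 - x) * x) := Real.sqrt_pos.mpr hu
      have hs2 : Real.sqrt ((1 - x) * x) ^ 2 = (1 - x) * x := Real.sq_sqrt hu.le
      have hsle : Real.sqrt ((1 - x) * x) ≤ 0.477 := by nlinarith
      have hqs : (1 - 2 * x) / (2 * Real.sqrt ((1 - x) * x)) * (2 * Real.sqrt ((1 - x) * x))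
          = 1 - 2 * x := div_mul_cancel₀ _ (by positivity)
      set s := Real.sqrt ((1 - x) * x) with hsdef
      set q := (1 - 2 * x) / (2 * s) with hqdef
      clear_value s
      clear_value q
      have hq : q ≤ -0.31 := by nlinarith
      nlinarith [mul_nonneg (by linarith : (0:ℝ) ≤ x - 0.65)
          (by linarith : (0:ℝ) ≤ Real.pi ^ 2 - 9.8695),
        mul_nonneg (by linarith : (0:ℝ) ≤ -q - 0.31)
          (by linarith : (0:ℝ) ≤ Real.pi ^ 2 - 9.8695)]
  have hfb : f b < 0 := by
    rw [hf]
    have hsn : (0:ℝ) ≤ Real.sqrt ((1 - b) * b) := Real.sqrt_nonneg _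
    have hqb : (0:ℝ) ≤ -(18110400 * b ^ 2 - 42257600 * b + 18110400) - 5000000 := by
      nlinarith [mul_nonneg (by linarith : (0:ℝ) ≤ b - 0.9453)
        (by linarith : (0:ℝ) ≤ 0.9455 - b)]
    nlinarith [mul_nonneg (by linarith : (0:ℝ) ≤ Real.pi ^ 2 - 9.8695) hqb,
      mul_nonneg (sq_nonneg Real.pi) hsn]
  refine ⟨hmono, hfb, ?_⟩
  intro p hp
  rcases eq_or_lt_of_le hp.2 with h | h
  · rw [h]; exact hfb
  · exact lt_trans (hmono hp ⟨by linarith [hp.1, hb1], le_refl b⟩ h) hfb
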